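/- For each integer m > 0, the vector ψ_m = (m/2) Σ_{k=0}^∞ (Γ(k + m/2) / √(k!(k+m)!)) |k+m⟩⊗|k⟩ in ℓ²(ℕ)⊗ℓ²(ℕ) is a unit vector, i.e., (m²/4) Σ_{k=0}^∞ Γ(k+m/2)² / (k!(k+m)!) = 1. -/

import Mathlib

open scoped InnerProductSpace
open Filter Finset Topology
open scoped ENNReal

noncomputable section

/-- The two-mode Hilbert space `ℓ²(ℕ) ⊗ ℓ²(ℕ) ≅ ℓ²(ℕ × ℕ)`. -/
abbrev H2 : Type := lp (fun _ : ℕ × ℕ => ℂ) 2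


-- auxiliary: Gamma product formula
lemma gamma_prod (m : ℕ) (hm : 0 < m) (N : ℕ) :
    Real.Gamma ((N : ℝ) + (m : ℝ) / 2)
      = Real.Gamma ((m : ℝ) / 2) * ∏ j ∈ Finset.range N, ((m : ℝ) / 2 + j) := by
  induction N with
  | zero => simp
  | succ n ih =>
    have hpos : (0 : ℝ) < (n : ℝ) + (m : ℝ) / 2 := by positivity
    have : ((n + 1 : ℕ) : ℝ) + (m : ℝ) / 2 = ((n : ℝ) + (m : ℝ) / 2) + 1 := by push_cast; ring
    rw [this, Real.Gamma_add_one (ne_of_gt hpos), ih, Finset.prod_range_succ]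
    ring

lemma fac_prod (n : ℕ) (M : ℕ) :
    (n.factorial : ℝ) * ∏ i ∈ Finset.range M, ((n : ℝ) + 1 + i) = ((n + M).factorial : ℝ) := by
  induction M with
  | zero => simp
  | succ M ih =>
    rw [Finset.prod_range_succ, ← mul_assoc, ih]
    have : n + (M + 1) = (n + M) + 1 := by ring
    rw [this, Nat.factorial_succ]
    push_cast; ring

lemma ratio_tendsto (c : ℝ) (hc : 0 ≤ c) :
    Tendsto (fun n : ℕ => ((n : ℝ) + 1) / ((n : ℝ) + 1 + c)) atTop (𝓝 1) := by
  have h0 : Tendsto (fun n : ℕ => ((n : ℝ) + 1 + c)) atTop atTop :=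
    tendsto_atTop_add_const_right _ (1 + c) (by simpa using tendsto_natCast_atTop_atTop) |>.congr
      (fun n => by ring)
  have h1 : Tendsto (fun n : ℕ => c / ((n : ℝ) + 1 + c)) atTop (𝓝 0) :=
    tendsto_const_nhds.div_atTop h0
  have h2 : Tendsto (fun n : ℕ => 1 - c / ((n : ℝ) + 1 + c)) atTop (𝓝 1) := by
    simpa using tendsto_const_nhds.sub h1
  refine h2.congr' ?_
  filter_upwards [h0.eventually_gt_atTop 0] with n hn
  field_simp
  ring

lemma U_eq (m : ℕ) (hm : 0 < m) (n : ℕ) :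
    ((n:ℝ)+1) * ((n:ℝ)+1+m) * (Real.Gamma (((n:ℝ)+1)+(m:ℝ)/2))^2
        / (((n+1).factorial : ℝ) * (((n+1)+m).factorial : ℝ))
      = (Real.Gamma ((m:ℝ)/2) / Real.GammaSeq ((m:ℝ)/2) (n+1))^2
        * ((((n:ℝ)+1)/((n:ℝ)+1+(m:ℝ)/2))^2
            * ∏ i ∈ Finset.range m, (((n:ℝ)+1)/((n:ℝ)+1+(i:ℝ)))) := by
  have hx0 : (0:ℝ) < (n:ℝ)+1 := by positivity
  set x : ℝ := (n:ℝ)+1 with hx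
  set Q : ℝ := ∏ j ∈ Finset.range (n+1), ((m:ℝ)/2 + j) with hQ
  have hQ0 : (0:ℝ) < Q := Finset.prod_pos (fun j _ => by positivity)
  have hGam : Real.Gamma (x + (m:ℝ)/2) = Real.Gamma ((m:ℝ)/2) * Q := by
    have h := gamma_prod m hm (n+1)
    push_cast at h
    rw [hx, hQ]
    exact h
  have ht2 : (x ^ ((m:ℝ)/2))^2 = x ^ m := by
    rw [← Real.rpow_natCast (x ^ ((m:ℝ)/2)) 2, ← Real.rpow_mul hx0.le,
      ← Real.rpow_natCast x m]
    congr 1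
    push_cast; ring
  have hG : Real.GammaSeq ((m:ℝ)/2) (n+1)
      = (x ^ ((m:ℝ)/2)) * ((n+1).factorial : ℝ) / (Q * ((m:ℝ)/2 + x)) := by
    have hc : ((n+1:ℕ):ℝ) = x := by rw [hx]; push_cast; ring
    rw [Real.GammaSeq, Finset.prod_range_succ, hc, ← hQ]
  have hfp : (n.factorial : ℝ) * ∏ i ∈ Finset.range m, (x + (i:ℝ)) = ((n+m).factorial : ℝ) := by
    simpa [hx, add_assoc] using fac_prod n m
  have hP0 : (0:ℝ) < ∏ i ∈ Finset.range m, (x + (i:ℝ)) :=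
    Finset.prod_pos (fun i _ => by positivity)
  have hfac1 : ((n+1).factorial : ℝ) = x * (n.factorial : ℝ) := by
    rw [Nat.factorial_succ]; push_cast; ring
  have hfac2 : (((n+1)+m).factorial : ℝ) = (x + m) * ((n+m).factorial : ℝ) := by
    have : (n+1)+m = (n+m)+1 := by ring
    rw [this, Nat.factorial_succ]; push_cast; ring
  have hprod : ∏ i ∈ Finset.range m, (x/(x+(i:ℝ)))
      = x ^ m / ∏ i ∈ Finset.range m, (x + (i:ℝ)) := by
    rw [Finset.prod_div_distrib, Finset.prod_const, Finset.card_range]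
  have hGs : (Real.Gamma ((m:ℝ)/2) / Real.GammaSeq ((m:ℝ)/2) (n+1))^2
      = Real.Gamma ((m:ℝ)/2)^2 * (Q * ((m:ℝ)/2 + x))^2
          / (x ^ m * ((n+1).factorial : ℝ)^2) := by
    rw [hG, div_pow, div_pow, mul_pow, ht2, div_div_eq_mul_div]
  have hprodeq : ∏ i ∈ Finset.range m, (x + (i:ℝ)) = ((n+m).factorial : ℝ) / (n.factorial : ℝ) := by
    rw [eq_div_iff (by positivity)]; linarith [hfp]
  rw [hGam, hGs, hprod, hprodeq, hfac1, hfac2]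
  have hnf : (0:ℝ) < (n.factorial : ℝ) := by positivity
  have hnmf : (0:ℝ) < ((n+m).factorial : ℝ) := by positivity
  have hxm : (0:ℝ) < x ^ m := by positivity
  field_simp
  ring

lemma U_tendsto (m : ℕ) (hm : 0 < m) :
    Tendsto (fun N : ℕ => (N:ℝ) * ((N:ℝ)+m) * (Real.Gamma ((N:ℝ)+(m:ℝ)/2))^2
        / ((N.factorial : ℝ) * ((N+m).factorial : ℝ))) atTop (𝓝 1) := by
  rw [← Filter.tendsto_add_atTop_iff_nat 1]
  have hΓ : (0:ℝ) < Real.Gamma ((m:ℝ)/2) := Real.Gamma_pos_of_pos (by positivity)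
  have h1 : Tendsto (fun n : ℕ => (Real.Gamma ((m:ℝ)/2) / Real.GammaSeq ((m:ℝ)/2) (n+1))^2)
      atTop (𝓝 1) := by
    have hseq : Tendsto (fun n : ℕ => Real.GammaSeq ((m:ℝ)/2) (n+1)) atTop
        (𝓝 (Real.Gamma ((m:ℝ)/2))) :=
      (Real.GammaSeq_tendsto_Gamma ((m:ℝ)/2)).comp (tendsto_add_atTop_nat 1)
    have := (tendsto_const_nhds (x := Real.Gamma ((m:ℝ)/2)) (f := atTop (α := ℕ))).div hseq
      (ne_of_gt hΓ)
    rw [div_self (ne_of_gt hΓ)] at this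
    simpa using this.pow 2
  have h2 : Tendsto (fun n : ℕ => (((n:ℝ)+1)/((n:ℝ)+1+(m:ℝ)/2))^2) atTop (𝓝 1) := by
    simpa using (ratio_tendsto ((m:ℝ)/2) (by positivity)).pow 2
  have h3 : Tendsto (fun n : ℕ => ∏ i ∈ Finset.range m, (((n:ℝ)+1)/((n:ℝ)+1+(i:ℝ))))
      atTop (𝓝 1) := by
    have := tendsto_finset_prod (f := fun (i : ℕ) (n : ℕ) => ((n:ℝ)+1)/((n:ℝ)+1+(i:ℝ)))
      (a := fun _ => (1:ℝ)) (Finset.range m)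
      (fun i _ => ratio_tendsto (i:ℝ) (by positivity))
    simpa using this
  have hall := h1.mul (h2.mul h3)
  rw [show (1:ℝ) * (1 * 1) = 1 by norm_num] at hall
  refine Tendsto.congr ?_ hall
  intro n
  have := U_eq m hm n
  push_cast
  rw [← this]

lemma telescope (m : ℕ) (hm : 0 < m) (k : ℕ) :
    ((m : ℝ) ^ 2 / 4) * (Real.Gamma ((k : ℝ) + (m : ℝ) / 2)) ^ 2
        / ((Nat.factorial k : ℝ) * (Nat.factorial (k + m) : ℝ))
    = (((k+1:ℕ)):ℝ) * (((k+1:ℕ):ℝ)+m) * (Real.Gamma (((k+1:ℕ):ℝ)+(m:ℝ)/2))^2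
        / (((k+1).factorial : ℝ) * (((k+1)+m).factorial : ℝ))
      - (k:ℝ) * ((k:ℝ)+m) * (Real.Gamma ((k:ℝ)+(m:ℝ)/2))^2
        / ((k.factorial : ℝ) * ((k+m).factorial : ℝ)) := by
  have hΓpos : (0:ℝ) < (k:ℝ) + (m:ℝ)/2 := by positivity
  have hGam : Real.Gamma (((k+1:ℕ):ℝ) + (m:ℝ)/2)
      = ((k:ℝ) + (m:ℝ)/2) * Real.Gamma ((k:ℝ) + (m:ℝ)/2) := by
    have : ((k+1:ℕ):ℝ) + (m:ℝ)/2 = ((k:ℝ) + (m:ℝ)/2) + 1 := by push_cast; ring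
    rw [this, Real.Gamma_add_one (ne_of_gt hΓpos)]
  have hfac1 : ((k+1).factorial : ℝ) = ((k:ℝ)+1) * (k.factorial : ℝ) := by
    rw [Nat.factorial_succ]; push_cast; ring
  have hfac2 : (((k+1)+m).factorial : ℝ) = ((k:ℝ)+1+m) * ((k+m).factorial : ℝ) := by
    have : (k+1)+m = (k+m)+1 := by ring
    rw [this, Nat.factorial_succ]; push_cast; ring
  have hk0 : (0:ℝ) < (k.factorial : ℝ) := by positivity
  have hkm0 : (0:ℝ) < ((k+m).factorial : ℝ) := by positivity
  rw [hGam, hfac1, hfac2]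
  push_cast
  field_simp
  ring

def Useq (m : ℕ) (N : ℕ) : ℝ :=
  (N:ℝ) * ((N:ℝ)+m) * (Real.Gamma ((N:ℝ)+(m:ℝ)/2))^2
    / ((N.factorial : ℝ) * ((N+m).factorial : ℝ))

lemma key_hasSum (m : ℕ) (hm : 0 < m) :
    HasSum
      (fun k : ℕ => ((m : ℝ) ^ 2 / 4) * (Real.Gamma ((k : ℝ) + (m : ℝ) / 2)) ^ 2
        / ((Nat.factorial k : ℝ) * (Nat.factorial (k + m) : ℝ)))
      1 := by
  have hnonneg : ∀ k : ℕ, 0 ≤ ((m : ℝ) ^ 2 / 4) * (Real.Gamma ((k : ℝ) + (m : ℝ) / 2)) ^ 2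
        / ((Nat.factorial k : ℝ) * (Nat.factorial (k + m) : ℝ)) := by
    intro k
    positivity
  rw [hasSum_iff_tendsto_nat_of_nonneg hnonneg]
  have hU : Tendsto (Useq m) atTop (𝓝 1) := by
    refine Tendsto.congr (fun N => ?_) (U_tendsto m hm)
    simp only [Useq]
  refine Tendsto.congr (fun N => ?_) hU
  rw [eq_comm]
  calc ∑ k ∈ Finset.range N, ((m : ℝ) ^ 2 / 4) * (Real.Gamma ((k : ℝ) + (m : ℝ) / 2)) ^ 2
        / ((Nat.factorial k : ℝ) * (Nat.factorial (k + m) : ℝ))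
      = ∑ k ∈ Finset.range N, (Useq m (k+1) - Useq m k) :=
        Finset.sum_congr rfl (fun k _ => by
          rw [telescope m hm k]; simp only [Useq])
    _ = Useq m N - Useq m 0 := Finset.sum_range_sub (Useq m) N
    _ = Useq m N := by simp [Useq]

/-- For every integer `m > 0`, the vector
`ψ_m = (m/2) Σ_k (Γ(k+m/2)/√(k!(k+m)!)) |k+m⟩⊗|k⟩` is a unit vector; equivalently,
`(m²/4) Σ_k Γ(k+m/2)²/(k!(k+m)!) = 1`. -/
theorem stmt18 (m : ℕ) (hm : 0 < m) (ψ : H2)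
    (hψ : ∀ i j : ℕ, (ψ : ∀ _ : ℕ × ℕ, ℂ) (i, j)
      = if i = j + m then
          ((((m : ℝ) / 2) * Real.Gamma ((j : ℝ) + (m : ℝ) / 2)
            / Real.sqrt ((Nat.factorial j : ℝ) * (Nat.factorial (j + m) : ℝ)) : ℝ) : ℂ)
        else 0) :
    ‖ψ‖ = 1 ∧
    HasSum
      (fun k : ℕ => ((m : ℝ) ^ 2 / 4) * (Real.Gamma ((k : ℝ) + (m : ℝ) / 2)) ^ 2
        / ((Nat.factorial k : ℝ) * (Nat.factorial (k + m) : ℝ)))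
      1 := by
  have hkey := key_hasSum m hm
  refine ⟨?_, hkey⟩
  -- the injective embedding of the diagonal
  set e : ℕ → ℕ × ℕ := fun k => (k + m, k) with he_def
  have he : Function.Injective e := by
    intro a b h
    simpa [he_def] using (congrArg Prod.snd h)
  have hsq : ∀ k : ℕ, ‖(ψ : ∀ _ : ℕ × ℕ, ℂ) (e k)‖ ^ 2
      = ((m : ℝ) ^ 2 / 4) * (Real.Gamma ((k : ℝ) + (m : ℝ) / 2)) ^ 2
        / ((Nat.factorial k : ℝ) * (Nat.factorial (k + m) : ℝ)) := by
    intro k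
    have hD : (0:ℝ) ≤ (Nat.factorial k : ℝ) * (Nat.factorial (k + m) : ℝ) := by positivity
    rw [he_def]
    simp only []
    rw [hψ (k + m) k, if_pos rfl]
    rw [Complex.norm_real, Real.norm_eq_abs, sq_abs, div_pow, mul_pow, Real.sq_sqrt hD]
    congr 1
    rw [div_pow]
    norm_num
  have hvanish : ∀ p : ℕ × ℕ, p ∉ Set.range e → ‖(ψ : ∀ _ : ℕ × ℕ, ℂ) p‖ ^ 2 = 0 := by
    rintro ⟨i, j⟩ hp
    have hij : i ≠ j + m := by
      intro h
      exact hp ⟨j, by simp [he_def, h]⟩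
    rw [hψ i j, if_neg hij]
    simp
  have hs : HasSum (fun p : ℕ × ℕ => ‖(ψ : ∀ _ : ℕ × ℕ, ℂ) p‖ ^ 2) 1 := by
    rw [← Function.Injective.hasSum_iff he hvanish]
    exact hkey.congr_fun (fun k => (hsq k))
  have hp2 : 0 < (2 : ℝ≥0∞).toReal := by norm_num
  rw [lp.norm_eq_tsum_rpow hp2 ψ]
  have htoreal : (2 : ℝ≥0∞).toReal = (2 : ℝ) := by norm_num
  have : ∑' p : ℕ × ℕ, ‖(ψ : ∀ _ : ℕ × ℕ, ℂ) p‖ ^ (2 : ℝ≥0∞).toReal = 1 := by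
    rw [htoreal]
    have : ∀ p : ℕ × ℕ, ‖(ψ : ∀ _ : ℕ × ℕ, ℂ) p‖ ^ (2:ℝ) = ‖(ψ : ∀ _ : ℕ × ℕ, ℂ) p‖ ^ (2:ℕ) := by
      intro p
      rw [← Real.rpow_natCast]
      norm_num
    rw [tsum_congr this]
    exact hs.tsum_eq
  rw [this, htoreal]
  norm_num
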